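/- Let H be a complex Hilbert space, let A be a bounded self-adjoint operator on H, and let φ : ℝ → ℂ be a Schwartz function. Define the Fourier transform φ̂(t) = ∫_ℝ e^{−itλ} φ(λ) dλ. Then the operator φ(A), defined by the continuous functional calculus applied to the restriction of φ to the spectrum of A, is given by the norm-convergent Bochner integral φ(A) = (1/2π) ∫_ℝ φ̂(t) · exp(itA) dt, where exp(itA) is the operator exponential of itA and φ̂(t) · exp(itA) denotes scalar multiplication of the operator exp(itA) by the complex number φ̂(t). -/

import Mathlib

open MeasureTheory Complex
open scoped FourierTransform Real

/-- For a bounded self-adjoint operator `A` on a complex Hilbert space and a Schwartz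
function `φ`, with `φ̂(t) = ∫ e^{-itλ} φ(λ) dλ`, the functional calculus satisfies
`φ(A) = (1/2π) ∫ φ̂(t) exp(itA) dt`. -/
theorem stmt4 {H : Type*} [NormedAddCommGroup H] [InnerProductSpace ℂ H] [CompleteSpace H]
    (A : H →L[ℂ] H) (hA : IsSelfAdjoint A)
    (φ : SchwartzMap ℝ ℂ)
    (φhat : ℝ → ℂ)
    (hφhat : ∀ t : ℝ, φhat t = ∫ lam : ℝ, Complex.exp (-(Complex.I * t * lam)) * φ lam) :
    cfc (fun z : ℂ => φ z.re) A =
      ((1 / (2 * Real.pi) : ℝ) : ℂ) •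
        ∫ t : ℝ, φhat t • NormedSpace.exp ((Complex.I * t) • A) := by
  have hπ : (2 * Real.pi) ≠ 0 := by positivity
  have hπℂ : ((Real.pi : ℂ)) ≠ 0 := by exact_mod_cast Real.pi_ne_zero
  have ha : IsStarNormal A := hA.isStarNormal
  set S := spectrum ℂ A with hS
  -- spectrum of selfadjoint is real
  have him : ∀ z : S, (z : ℂ).im = 0 := fun z => hA.im_eq_zero_of_mem_spectrum z.2
  -- the exponential continuous maps
  let E2 : C(ℝ × S, ℂ) := ⟨fun p => Complex.exp (Complex.I * p.1 * p.2), by fun_prop⟩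
  let e : ℝ → C(S, ℂ) := fun t => E2.curry t
  have he : Continuous e := E2.curry.continuous
  have he_apply : ∀ (t : ℝ) (z : S), e t z = Complex.exp (Complex.I * t * z) := fun _ _ => rfl
  have he_norm : ∀ t : ℝ, ‖e t‖ ≤ 1 := by
    intro t
    rw [ContinuousMap.norm_le _ zero_le_one]
    intro z
    rw [he_apply]
    rw [Complex.norm_exp]
    simp [him z]
  -- relate φhat to the Mathlib Fourier transform
  have hφhat' : ∀ t : ℝ, φhat t = 𝓕 (⇑φ) (t / (2 * Real.pi)) := by
    intro t
    rw [hφhat, Real.fourier_real_eq_integral_exp_smul]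
    refine integral_congr_ae (Filter.Eventually.of_forall fun lam => ?_)
    simp only [smul_eq_mul]
    have h1 : (-2 * Real.pi * lam * (t / (2 * Real.pi)) : ℝ) = -(t * lam) := by
      field_simp
    rw [h1]
    congr 1
    push_cast
    ring
  have hFc : Integrable (𝓕 (⇑φ)) := by
    have := (SchwartzMap.fourierTransformCLM ℂ φ).integrable (μ := volume)
    rwa [SchwartzMap.fourierTransformCLM_apply] at this
  have hφhat_int : Integrable φhat := by
    have := hFc.comp_div (R := 2 * Real.pi) hπ
    exact this.congr (Filter.Eventually.of_forall fun t => (hφhat' t).symm)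
  have hφhat_cont : Continuous φhat := by
    have : Continuous fun t : ℝ => 𝓕 (⇑φ) (t / (2 * Real.pi)) :=
      (SchwartzMap.fourierTransformCLM ℂ φ).continuous.comp (continuous_id.div_const _)
    exact this.congr fun t => (hφhat' t).symm
  -- the integrand in C(S, ℂ)
  let F : ℝ → C(S, ℂ) := fun t => φhat t • e t
  have hFmeas : AEStronglyMeasurable F volume :=
    ((hφhat_cont.smul he)).aestronglyMeasurable
  have hFint : Integrable F := by
    refine hφhat_int.norm.mono' hFmeas (Filter.Eventually.of_forall fun t => ?_)
    calc ‖F t‖ = ‖φhat t‖ * ‖e t‖ := norm_smul (φhat t) (e t)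
    _ ≤ ‖φhat t‖ * 1 := by gcongr; exact he_norm t
    _ = ‖φhat t‖ := mul_one _
  -- the CFC as a continuous linear map
  let ψ : C(S, ℂ) →L[ℂ] (H →L[ℂ] H) :=
    { toLinearMap := (cfcHom ha (R := ℂ) : C(S, ℂ) →⋆ₐ[ℂ] (H →L[ℂ] H)).toLinearMap,
      cont := cfcHom_continuous ha }
  have hψ : ∀ f : C(S, ℂ), ψ f = cfcHom ha f := fun f => rfl
  -- exp identity
  have hexp : ∀ t : ℝ, NormedSpace.exp ((Complex.I * t) • A) = cfcHom ha (e t) := by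
    intro t
    have h1 : cfcHom ha ((Complex.I * (t : ℂ)) • ((ContinuousMap.id ℂ).restrict S))
        = (Complex.I * t) • A := by
      rw [_root_.map_smul, cfcHom_id ha]
    letI : Algebra ℚ (H →L[ℂ] H) := Algebra.compHom _ (algebraMap ℚ ℂ)
    rw [← h1, ← NormedSpace.map_exp _ (cfcHom_continuous ha)]
    congr 1
    ext z
    have h2 := NormedSpace.map_exp (ContinuousMap.evalAlgHom ℂ ℂ z)
      (continuous_eval_const z)
      ((Complex.I * (t : ℂ)) • ((ContinuousMap.id ℂ).restrict S))
    simp only [ContinuousMap.evalAlgHom_apply] at h2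
    rw [he_apply, h2]
    simp only [ContinuousMap.smul_apply, ContinuousMap.restrict_apply, ContinuousMap.id_apply,
      smul_eq_mul]
    rw [← Complex.exp_eq_exp_ℂ]
  -- the target continuous map
  let φS : C(S, ℂ) := ⟨fun z => (φ (z : ℂ).re : ℂ),
    φ.continuous.comp (Complex.continuous_re.comp continuous_subtype_val)⟩
  -- Fourier inversion, pointwise on the spectrum
  have key : ∫ t, F t = ((2 * Real.pi : ℝ) : ℂ) • φS := by
    ext z
    have hz : (((z : ℂ).re : ℂ)) = (z : ℂ) := by
      apply Complex.ext
      · simp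
      · simp [him z]
    have h1 : (∫ t, F t) z = ∫ t, (F t) z :=
      ((ContinuousMap.evalCLM ℂ z).integral_comp_comm hFint).symm
    have h2 : ∀ t : ℝ, (F t) z = φhat t * Complex.exp (Complex.I * t * z) := by
      intro t
      simp only [F, ContinuousMap.smul_apply, smul_eq_mul, he_apply]
    set x : ℝ := (z : ℂ).re with hx
    let g : ℝ → ℂ := fun u => 𝓕 (⇑φ) u * Complex.exp (Complex.I * (2 * Real.pi * u) * x)
    have h3 : ∀ t : ℝ, (F t) z = g (t / (2 * Real.pi)) := by
      intro t
      rw [h2, hφhat']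
      simp only [g]
      congr 2
      rw [← hz]
      push_cast
      field_simp
    have h4 : (∫ t, (F t) z) = |2 * Real.pi| • ∫ u, g u := by
      rw [← MeasureTheory.Measure.integral_comp_div g (2 * Real.pi)]
      exact integral_congr_ae (Filter.Eventually.of_forall h3)
    have h5 : ∫ u, g u = 𝓕⁻ (𝓕 ⇑φ) x := by
      rw [Real.fourierInv_eq']
      refine integral_congr_ae (Filter.Eventually.of_forall fun u => ?_)
      simp only [g, smul_eq_mul, RCLike.inner_apply, conj_trivial]
      rw [mul_comm]
      congr 1
      push_cast
      ring
    have h6 : 𝓕⁻ (𝓕 ⇑φ) x = φ x := by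
      rw [φ.continuous.fourierInv_fourier_eq (φ.integrable (μ := volume)) hFc]
    rw [h1, h4, h5, h6]
    simp only [ContinuousMap.smul_apply, φS, ContinuousMap.coe_mk, smul_eq_mul]
    rw [abs_of_pos (by positivity : (0:ℝ) < 2 * Real.pi)]
    rw [Complex.real_smul, ← hx]
  -- assemble everything
  have hLHS : cfc (fun z : ℂ => (φ z.re : ℂ)) A = cfcHom ha φS := by
    rw [cfc_apply (fun z : ℂ => (φ z.re : ℂ)) A ha
      (φ.continuous.comp Complex.continuous_re).continuousOn]
    rfl
  have hRHS : (∫ t : ℝ, φhat t • NormedSpace.exp ((Complex.I * t) • A)) = ψ (∫ t, F t) := by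
    rw [← ψ.integral_comp_comm hFint]
    refine integral_congr_ae (Filter.Eventually.of_forall fun t => ?_)
    show φhat t • NormedSpace.exp ((Complex.I * t) • A) = ψ (F t)
    rw [hexp t]
    exact (ψ.map_smul _ _).symm
  rw [hLHS, hRHS, key, ψ.map_smul, smul_smul,
    show ((1 / (2 * Real.pi) : ℝ) : ℂ) * ((2 * Real.pi : ℝ) : ℂ) = 1 by
      push_cast; field_simp,
    one_smul, hψ]
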